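/- Let Λ ⊂ ℝ^d be the lattice generated by v₁ = (4+δ)e₁ and vᵢ = −(2+δ/2)e₁ + 2√3 eᵢ for i = 2,…,d, where δ > 0 and e₁,…,e_d are the standard basis vectors. Then any two distinct points of Λ are at Euclidean distance strictly greater than 4. -/

import Mathlib

open Real Finset

/-- The generating vectors in `ℝ^d`: `v₁ = (4+δ)e₁`, and
`vᵢ = −(2+δ/2)e₁ + 2√3 eᵢ` for `i ≠ 1`. -/
noncomputable def latVd (d : ℕ) [NeZero d] (δ : ℝ) (i : Fin d) : EuclideanSpace ℝ (Fin d) :=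
  if i = 0 then (4 + δ) • EuclideanSpace.single (0 : Fin d) (1 : ℝ)
  else (-(2 + δ / 2)) • EuclideanSpace.single (0 : Fin d) (1 : ℝ) +
    (2 * Real.sqrt 3) • EuclideanSpace.single i (1 : ℝ)

theorem latVd_coord (d : ℕ) [NeZero d] (δ : ℝ) (γ : Fin d → ℤ) (j : Fin d) :
    (∑ i, (γ i : ℝ) • latVd d δ i) j =
      if j = 0 then (4+δ)*(γ 0:ℝ) - (2+δ/2)*∑ i ∈ univ.erase 0, (γ i:ℝ)
      else 2*Real.sqrt 3*(γ j:ℝ) := by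
  have h1 : (∑ i, (γ i : ℝ) • latVd d δ i) j = ∑ i, (γ i : ℝ) * (latVd d δ i j) :=
    by simp [WithLp.ofLp_sum, Finset.sum_apply]
  rw [h1, ← Finset.sum_erase_add _ _ (Finset.mem_univ (0:Fin d))]
  by_cases hj : j = 0
  · subst hj
    rw [if_pos rfl]
    have h2 : ∀ i ∈ univ.erase (0:Fin d), (γ i : ℝ) * (latVd d δ i 0)
        = (γ i : ℝ) * (-(2+δ/2)) := by
      intro i hi
      have hi0 : i ≠ 0 := Finset.ne_of_mem_erase hi
      simp [latVd, hi0, EuclideanSpace.single_apply, Ne.symm hi0]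
    rw [Finset.sum_congr rfl h2]
    have h3 : (γ 0 : ℝ) * (latVd d δ 0 0) = (γ 0 : ℝ) * (4+δ) := by
      simp [latVd, EuclideanSpace.single_apply]
    rw [h3, ← Finset.sum_mul]
    ring
  · rw [if_neg hj]
    have h3 : (γ 0 : ℝ) * (latVd d δ 0 j) = 0 := by
      simp [latVd, EuclideanSpace.single_apply, hj]
    rw [h3, add_zero]
    rw [Finset.sum_eq_single j]
    · simp [latVd, hj, EuclideanSpace.single_apply]; ring
    · intro i hi hij
      have hi0 : i ≠ 0 := Finset.ne_of_mem_erase hi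
      simp [latVd, hi0, EuclideanSpace.single_apply, hj, Ne.symm hij]
    · intro h; exact absurd (Finset.mem_erase.mpr ⟨hj, Finset.mem_univ j⟩) h


/-- any two distinct points of the lattice
`Λ_d = {∑ᵢ αᵢ vᵢ : α ∈ ℤ^d}` in `ℝ^d` are at Euclidean distance strictly greater than `4`. -/
theorem lattice_min_dist_d (d : ℕ) [NeZero d] (δ : ℝ) (hδ : 0 < δ)
    (p q : EuclideanSpace ℝ (Fin d))
    (hp : ∃ α : Fin d → ℤ, p = ∑ i, (α i : ℝ) • latVd d δ i)
    (hq : ∃ α : Fin d → ℤ, q = ∑ i, (α i : ℝ) • latVd d δ i)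
    (hpq : p ≠ q) : 4 < dist p q := by
  obtain ⟨α, rfl⟩ := hp
  obtain ⟨β, rfl⟩ := hq
  set γ : Fin d → ℤ := fun i => α i - β i with hγdef
  have hx : (∑ i, (α i:ℝ) • latVd d δ i) - (∑ i, (β i:ℝ) • latVd d δ i)
      = ∑ i, (γ i:ℝ) • latVd d δ i := by
    rw [← Finset.sum_sub_distrib]
    refine Finset.sum_congr rfl fun i _ => ?_
    rw [← sub_smul]
    push_cast [hγdef]
    ring_nf
  set x : EuclideanSpace ℝ (Fin d) := ∑ i, (γ i:ℝ) • latVd d δ i with hxdef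
  have hdist : dist (∑ i, (α i:ℝ) • latVd d δ i) (∑ i, (β i:ℝ) • latVd d δ i) = ‖x‖ := by
    rw [dist_eq_norm, hx]
  have hγ0 : γ ≠ 0 := by
    intro h
    apply hpq
    have : (∑ i, (α i:ℝ) • latVd d δ i) - (∑ i, (β i:ℝ) • latVd d δ i) = 0 := by
      rw [hx, hxdef]
      simp [h]
    exact sub_eq_zero.mp this
  -- integer quantities
  set Az : ℤ := γ 0 with hAz
  set Sz : ℤ := ∑ i ∈ univ.erase (0:Fin d), γ i with hSz
  set Tz : ℤ := ∑ i ∈ univ.erase (0:Fin d), (γ i)^2 with hTz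
  -- norm squared formula
  have hnorm : ‖x‖^2 = ((4+δ)*(Az:ℝ) - (2+δ/2)*(Sz:ℝ))^2 + 12*(Tz:ℝ) := by
    rw [EuclideanSpace.norm_eq, Real.sq_sqrt (by positivity)]
    rw [← Finset.sum_erase_add _ _ (Finset.mem_univ (0:Fin d))]
    have e0 : ‖x 0‖^2 = ((4+δ)*(Az:ℝ) - (2+δ/2)*(Sz:ℝ))^2 := by
      rw [hxdef, latVd_coord, if_pos rfl, Real.norm_eq_abs, sq_abs, hAz, hSz]
      push_cast; ring
    have e1 : ∀ j ∈ univ.erase (0:Fin d), ‖x j‖^2 = 12 * ((γ j:ℝ))^2 := by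
      intro j hj
      rw [hxdef, latVd_coord, if_neg (Finset.ne_of_mem_erase hj), Real.norm_eq_abs, sq_abs]
      have h3 : Real.sqrt 3 ^ 2 = 3 := Real.sq_sqrt (by norm_num)
      nlinarith [h3]
    rw [Finset.sum_congr rfl e1, e0, ← Finset.mul_sum, hTz]
    push_cast; ring
  -- parity
  have hpar : (2:ℤ) ∣ Tz - Sz := by
    rw [hTz, hSz, ← Finset.sum_sub_distrib]
    refine Finset.dvd_sum fun i _ => ?_
    have : (γ i)^2 - γ i = (γ i - 1) * ((γ i - 1) + 1) := by ring
    rw [this]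
    exact (Int.even_mul_succ_self (γ i - 1)).two_dvd
  have hTz0 : 0 ≤ Tz := Finset.sum_nonneg fun i _ => sq_nonneg _
  have key : 16 < ‖x‖^2 := by
    rcases lt_trichotomy Tz 1 with hT | hT | hT
    · -- Tz = 0
      have hTzz : Tz = 0 := le_antisymm (by omega) hTz0
      have hall : ∀ i ∈ univ.erase (0:Fin d), (γ i)^2 = 0 := by
        rw [Finset.sum_eq_zero_iff_of_nonneg (fun i _ => sq_nonneg _)] at hTzz
        exact hTzz
      have hall' : ∀ i ∈ univ.erase (0:Fin d), γ i = 0 := fun i hi =>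
        pow_eq_zero_iff (n := 2) (by norm_num) |>.mp (hall i hi)
      have hSzz : Sz = 0 := Finset.sum_eq_zero hall'
      have hAzz : Az ≠ 0 := by
        intro h
        apply hγ0
        funext i
        by_cases hi : i = 0
        · rw [hi]; exact h
        · exact hall' i (Finset.mem_erase.mpr ⟨hi, Finset.mem_univ i⟩)
      have h1 : (1:ℝ) ≤ (Az:ℝ)^2 := by
        have h1' : (1:ℤ) ≤ Az^2 := by
          have := Int.one_le_abs hAzz
          nlinarith [sq_abs Az, abs_nonneg Az]
        exact_mod_cast h1'
      rw [hnorm, hSzz, hTzz]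
      push_cast
      have h2 : (4+δ)^2 * 1 ≤ (4+δ)^2 * (Az:ℝ)^2 :=
        mul_le_mul_of_nonneg_left h1 (by positivity)
      nlinarith [h2, hδ]
    · -- Tz = 1 : Sz odd
      have hodd : Odd Sz := by
        obtain ⟨k, hk⟩ := hpar
        rcases Int.even_or_odd Sz with ⟨m, hm⟩ | ho
        · exfalso; omega
        · exact ho
      have h2AS : (2*Az - Sz) ≠ 0 := by
        obtain ⟨m, hm⟩ := hodd
        omega
      have habs : (1:ℤ) ≤ (2*Az - Sz)^2 := by
        have := Int.one_le_abs h2AS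
        nlinarith [sq_abs (2*Az - Sz), abs_nonneg (2*Az - Sz)]
      have habsR : (1:ℝ) ≤ ((2*Az - Sz:ℤ):ℝ)^2 := by exact_mod_cast habs
      rw [hnorm, hT]
      have hrw : (4+δ)*(Az:ℝ) - (2+δ/2)*(Sz:ℝ) = ((4+δ)/2) * ((2*Az - Sz:ℤ):ℝ) := by
        push_cast; ring
      rw [hrw]
      have h2 : ((4+δ)/2)^2 ≤ (((4+δ)/2) * ((2*Az - Sz:ℤ):ℝ))^2 := by
        calc ((4+δ)/2)^2 = ((4+δ)/2)^2 * 1 := by ring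
          _ ≤ ((4+δ)/2)^2 * ((2*Az - Sz:ℤ):ℝ)^2 :=
              mul_le_mul_of_nonneg_left habsR (sq_nonneg _)
          _ = (((4+δ)/2) * ((2*Az - Sz:ℤ):ℝ))^2 := by ring
      have h3 : (4:ℝ) < ((4+δ)/2)^2 := by nlinarith [hδ]
      have h4 : (((1:ℤ)):ℝ) = 1 := by norm_num
      rw [h4]
      linarith
    · -- Tz ≥ 2
      have h2 : (2:ℝ) ≤ (Tz:ℝ) := by exact_mod_cast hT
      rw [hnorm]
      linarith [sq_nonneg ((4+δ)*(Az:ℝ) - (2+δ/2)*(Sz:ℝ)), h2]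
  rw [hdist]
  refine lt_of_pow_lt_pow_left₀ 2 (norm_nonneg x) ?_
  norm_num
  linarith [key]
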